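/- The numbers α and γ are multiplicatively independent: there exist no positive integers p and q with α^q = γ^p. Consequently, the real number (log α)/(log γ) is irrational. Here α is the unique real root of X³ − X² − 1 and γ = (1 + √5)/2. -/

import Mathlib

open Polynomial Real goldenRatio IntermediateField

lemma no_int_root_cubic (n : ℤ) : n ^ 3 - n ^ 2 - 1 ≠ 0 := by
  intro h
  have h1 : n ^ 2 * (n - 1) = 1 := by ring_nf; linarith
  have h2 : n ^ 2 ≤ 1 := Int.le_of_dvd one_pos ⟨n - 1, h1.symm⟩
  have h3 : -1 ≤ n := by nlinarith
  have h4 : n ≤ 1 := by nlinarith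
  interval_cases n <;> norm_num at h

lemma cubic_irred : Irreducible (X ^ 3 - X ^ 2 - 1 : ℚ[X]) := by
  have hdeg : (X ^ 3 - X ^ 2 - 1 : ℚ[X]).natDegree = 3 := by compute_degree!
  rw [Polynomial.irreducible_iff_roots_eq_zero_of_degree_le_three]
  · rw [Multiset.eq_zero_iff_forall_notMem]
    intro r hr
    have hne : (X ^ 3 - X ^ 2 - 1 : ℚ[X]) ≠ 0 := by
      intro h; rw [h] at hdeg; simp at hdeg
    rw [Polynomial.mem_roots hne] at hr
    have hroot : r ^ 3 - r ^ 2 - 1 = 0 := by simpa [Polynomial.IsRoot] using hr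
    have haev : aeval r (X ^ 3 - X ^ 2 - 1 : ℤ[X]) = 0 := by simpa using hroot
    obtain ⟨n, hn⟩ := isInteger_of_is_root_of_monic (by monicity!) haev
    have hn' : (n : ℚ) = r := by simpa using hn
    rw [← hn'] at hroot
    exact no_int_root_cubic n (by exact_mod_cast hroot)
  · rw [hdeg]; norm_num
  · rw [hdeg]


lemma quad_irred : Irreducible (X ^ 2 - 5 : ℚ[X]) := by
  have hdeg : (X ^ 2 - 5 : ℚ[X]).natDegree = 2 := by compute_degree!
  rw [Polynomial.irreducible_iff_roots_eq_zero_of_degree_le_three]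
  · rw [Multiset.eq_zero_iff_forall_notMem]
    intro r hr
    have hne : (X ^ 2 - 5 : ℚ[X]) ≠ 0 := by
      intro h; rw [h] at hdeg; simp at hdeg
    rw [Polynomial.mem_roots hne] at hr
    have hroot : r ^ 2 - 5 = 0 := by simpa [Polynomial.IsRoot] using hr
    have haev : aeval r (X ^ 2 - 5 : ℤ[X]) = 0 := by
      simp only [map_sub, map_pow, aeval_X, map_ofNat]
      simpa using hroot
    obtain ⟨n, hn⟩ := isInteger_of_is_root_of_monic (by monicity!) haev
    have hn' : (n : ℚ) = r := by simpa using hn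
    rw [← hn'] at hroot
    have hz : n ^ 2 - 5 = 0 := by exact_mod_cast hroot
    have h3 : -3 ≤ n := by nlinarith
    have h4 : n ≤ 3 := by nlinarith
    interval_cases n <;> norm_num at hz
  · rw [hdeg]
  · rw [hdeg]; norm_num


theorem alpha_gamma_mult_indep (α : ℝ) (hα : α ^ 3 - α ^ 2 - 1 = 0) :
    (∀ p q : ℕ, 0 < p → 0 < q → α ^ q ≠ ((1 + Real.sqrt 5) / 2) ^ p) ∧
    Irrational (Real.log α / Real.log ((1 + Real.sqrt 5) / 2)) := by
  have hα3 : α ^ 3 = α ^ 2 + 1 := by linarith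
  have hα1 : 1 < α := by nlinarith [sq_nonneg α, sq_nonneg (α - 1), sq_nonneg (α + 1)]
  have hint : IsIntegral ℚ α := by
    refine ⟨X ^ 3 - X ^ 2 - 1, ?_, ?_⟩
    · monicity!
    · simp [hα3]
  have hmin : minpoly ℚ α = X ^ 3 - X ^ 2 - 1 := by
    refine (minpoly.eq_of_irreducible_of_monic cubic_irred ?_ (by monicity!)).symm
    simp [hα3]
  haveI : FiniteDimensional ℚ ℚ⟮α⟯ := IntermediateField.adjoin.finiteDimensional hint
  have hfr : Module.finrank ℚ ℚ⟮α⟯ = 3 := by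
    rw [IntermediateField.adjoin.finrank hint, hmin]
    compute_degree!
  have key : ∀ p q : ℕ, 0 < p → 0 < q → α ^ q ≠ ((1 + Real.sqrt 5) / 2) ^ p := by
    intro p q hp hq heq
    obtain ⟨n, rfl⟩ := Nat.exists_eq_add_of_lt hp
    -- golden ratio power in ℚ⟮α⟯
    have hαmem : α ^ q ∈ ℚ⟮α⟯ := pow_mem (IntermediateField.mem_adjoin_simple_self ℚ α) q
    rw [heq] at hαmem
    simp only [Nat.zero_add] at hαmem
    have hfib : (0:ℝ) < Nat.fib (n + 1) := by
      exact_mod_cast Nat.fib_pos.mpr (Nat.succ_pos n)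
    have hexp : φ * Nat.fib (n + 1) + Nat.fib n = φ ^ (n + 1) := goldenRatio_mul_fib_succ_add_fib n
    have hφeq : (φ : ℝ) = (((1 + Real.sqrt 5) / 2) ^ (n + 1) - Nat.fib n) / Nat.fib (n + 1) := by
      rw [eq_div_iff (ne_of_gt hfib)]
      show φ * Nat.fib (n+1) = φ ^ (n+1) - Nat.fib n
      linarith [hexp]
    have hφmem : (φ : ℝ) ∈ ℚ⟮α⟯ := by
      rw [hφeq]
      exact div_mem (sub_mem hαmem (IntermediateField.natCast_mem _ _))
        (IntermediateField.natCast_mem _ _)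
    have hs5 : Real.sqrt 5 ∈ ℚ⟮α⟯ := by
      have h5 : Real.sqrt 5 = φ + φ - 1 := by unfold goldenRatio; ring
      rw [h5]
      exact sub_mem (add_mem hφmem hφmem) (one_mem _)
    set s : ℚ⟮α⟯ := ⟨Real.sqrt 5, hs5⟩ with hs
    have hs2 : s ^ 2 = 5 := by
      ext
      push_cast
      rw [Real.sq_sqrt (by norm_num : (0:ℝ) ≤ 5)]
      norm_cast
    have hmins : minpoly ℚ s = X ^ 2 - 5 := by
      refine (minpoly.eq_of_irreducible_of_monic quad_irred ?_ (by monicity!)).symm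
      simp [hs2, map_ofNat]
    have hdvd : (minpoly ℚ s).natDegree ∣ Module.finrank ℚ ℚ⟮α⟯ :=
      minpoly.degree_dvd (IsIntegral.of_finite ℚ s)
    rw [hmins, hfr] at hdvd
    have h2 : (X ^ 2 - 5 : ℚ[X]).natDegree = 2 := by compute_degree!
    rw [h2] at hdvd
    norm_num at hdvd
  refine ⟨key, ?_⟩
  rintro ⟨r, hr⟩
  have hγ1 : (1:ℝ) < (1 + Real.sqrt 5) / 2 := one_lt_goldenRatio
  have hlogγ : 0 < Real.log ((1 + Real.sqrt 5) / 2) := Real.log_pos hγ1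
  have hlogα : 0 < Real.log α := Real.log_pos hα1
  have hrpos : 0 < r := by
    have : (0:ℝ) < r := by rw [hr]; positivity
    exact_mod_cast this
  have hnum : 0 < r.num := Rat.num_pos.mpr hrpos
  have hrd : (r : ℝ) = (r.num : ℝ) / (r.den : ℝ) := by
    exact_mod_cast congrArg (Rat.cast : ℚ → ℝ) (Rat.num_div_den r).symm
  have hden : (0:ℝ) < r.den := by exact_mod_cast r.pos
  have hkey : (r.den : ℝ) * Real.log α = (r.num : ℝ) * Real.log ((1 + Real.sqrt 5) / 2) := by
    rw [hrd] at hr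
    field_simp at hr
    linarith [hr]
  have hlogpow : Real.log (α ^ r.den) = Real.log (((1 + Real.sqrt 5) / 2) ^ r.num.toNat) := by
    rw [Real.log_pow, Real.log_pow]
    have hc : ((r.num.toNat : ℕ) : ℝ) = (r.num : ℝ) := by
      exact_mod_cast Int.toNat_of_nonneg hnum.le
    rw [hc]
    exact hkey
  have hαpos : 0 < α := lt_trans one_pos hα1
  have heq : α ^ r.den = ((1 + Real.sqrt 5) / 2) ^ r.num.toNat := by
    have h1 : α ^ r.den = Real.exp (Real.log (α ^ r.den)) :=
      (Real.exp_log (pow_pos hαpos _)).symm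
    rw [h1, hlogpow, Real.exp_log (pow_pos (by positivity) _)]
  exact key r.num.toNat r.den (by omega) r.pos heq
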